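/- Let M = [[A, B], [Bᵀ, C]] be a real positive semidefinite matrix of rank r with A, C square and A, B fixed. If rank(A) < r, then there exists C' ≠ C such that [[A, B], [Bᵀ, C']] is positive semidefinite of rank r. Hence the PSD completion is not unique. -/

import Mathlib

open Matrix

/-- Solvability of `(U₁ᵀ U₁) X = U₁ᵀ U₂`. -/
lemma exists_normal_solution {m n k : Type*} [Fintype m] [Fintype n] [Fintype k]
    (U₁ : Matrix m n ℝ) (U₂ : Matrix m k ℝ) :
    ∃ X : Matrix n k ℝ, (U₁ᵀ * U₁) * X = U₁ᵀ * U₂ := by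
  have hrange : LinearMap.range (U₁ᵀ * U₁).mulVecLin = LinearMap.range U₁ᵀ.mulVecLin := by
    apply Submodule.eq_of_le_of_finrank_le
    · rintro _ ⟨x, rfl⟩
      exact ⟨U₁.mulVec x, by simp [mulVec_mulVec]⟩
    · have h1 : (U₁ᵀ * U₁).rank = U₁ᵀ.rank := by
        rw [rank_transpose_mul_self, rank_transpose]
      simpa [Matrix.rank] using h1.ge
  have hcol : ∀ j : k, ∃ x : n → ℝ, (U₁ᵀ * U₁).mulVec x = fun i => (U₁ᵀ * U₂) i j := by
    intro j
    have hmem : (fun i => (U₁ᵀ * U₂) i j) ∈ LinearMap.range U₁ᵀ.mulVecLin := by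
      refine ⟨fun i => U₂ i j, ?_⟩
      ext i
      simp [mulVec, vecMul, dotProduct, mul_apply, mul_comm]
    rw [← hrange] at hmem
    obtain ⟨x, hx⟩ := hmem
    exact ⟨x, hx⟩
  choose f hf using hcol
  refine ⟨Matrix.of fun i j => f j i, ?_⟩
  ext i j
  have := congrFun (hf j) i
  simpa [mulVec, dotProduct, mul_apply] using this

/-- PSD completion: if `rank A < r = rank M`, the PSD completion is not unique. -/
theorem psd_nonunique_completion_of_rank_lt {p q r : ℕ}
    (A : Matrix (Fin p) (Fin p) ℝ) (B : Matrix (Fin p) (Fin q) ℝ)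
    (C : Matrix (Fin q) (Fin q) ℝ)
    (hPSD : (fromBlocks A B Bᵀ C).PosSemidef)
    (hM : (fromBlocks A B Bᵀ C).rank = r) (hA : A.rank < r) :
    ∃ C' : Matrix (Fin q) (Fin q) ℝ, C' ≠ C ∧ (fromBlocks A B Bᵀ C').PosSemidef ∧
      (fromBlocks A B Bᵀ C').rank = r := by
  classical
  obtain ⟨U, hU⟩ : ∃ U : Matrix (Fin p ⊕ Fin q) (Fin p ⊕ Fin q) ℝ, fromBlocks A B Bᵀ C = star U * U := by
    open scoped MatrixOrder in exact CStarAlgebra.nonneg_iff_eq_star_mul_self.mp hPSD.nonneg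
  rw [star_eq_conjTranspose] at hU
  rw [conjTranspose_eq_transpose_of_trivial] at hU
  set U₁ := U.toCols₁ with hU₁def
  set U₂ := U.toCols₂ with hU₂def
  have hUcols : U = fromCols U₁ U₂ := (fromCols_toCols U).symm
  have hblocks : fromBlocks A B Bᵀ C
      = fromBlocks (U₁ᵀ * U₁) (U₁ᵀ * U₂) (U₂ᵀ * U₁) (U₂ᵀ * U₂) := by
    rw [hU, hUcols, transpose_fromCols, fromRows_mul_fromCols]
  obtain ⟨hA', hB', -, hC'⟩ := fromBlocks_inj.mp hblocks
  obtain ⟨X, hX⟩ := exists_normal_solution U₁ U₂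
  set W := U₂ - U₁ * X with hWdef
  have hW0 : U₁ᵀ * W = 0 := by
    rw [hWdef, Matrix.mul_sub, ← Matrix.mul_assoc, hX, sub_self]
  have hW0' : Wᵀ * U₁ = 0 := by
    have := congrArg transpose hW0
    simpa [transpose_mul] using this
  set S := Wᵀ * W with hSdef
  have hStrans : Sᵀ = S := by rw [hSdef, transpose_mul, transpose_transpose]
  have hU₂W : U₂ᵀ * W = S := by
    have hU₂eq : U₂ = W + U₁ * X := by rw [hWdef]; abel
    rw [hU₂eq, transpose_add, transpose_mul, Matrix.add_mul, Matrix.mul_assoc, hW0, Matrix.mul_zero, add_zero, hSdef]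
  have hWU₂ : Wᵀ * U₂ = S := by
    have := congrArg transpose hU₂W
    rwa [transpose_mul, transpose_transpose, hStrans] at this
  -- the new matrix
  set V := fromCols U₁ (U₂ + W) with hVdef
  have hkey : fromBlocks A B Bᵀ (C + (3:ℝ) • S) = Vᵀ * V := by
    rw [hVdef, transpose_fromCols, fromRows_mul_fromCols]
    have h12 : U₁ᵀ * (U₂ + W) = B := by rw [Matrix.mul_add, hW0, add_zero, hB']
    have h21 : (U₂ + W)ᵀ * U₁ = Bᵀ := by
      have := congrArg transpose h12
      rwa [transpose_mul, transpose_transpose] at this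
    have h22 : (U₂ + W)ᵀ * (U₂ + W) = C + (3:ℝ) • S := by
      rw [transpose_add, Matrix.add_mul, Matrix.mul_add, Matrix.mul_add, hU₂W, hWU₂, ← hSdef, ← hC',
        show (3:ℝ) = 1 + 1 + 1 by norm_num, add_smul, add_smul, one_smul]
      abel
    rw [hA', h12, h21, h22]
  -- V = U * T for invertible T
  set T : Matrix (Fin p ⊕ Fin q) (Fin p ⊕ Fin q) ℝ
      := fromBlocks 1 (-X) 0 ((2:ℝ) • 1) with hTdef
  have hV : V = U * T := by
    rw [hVdef, hUcols, hTdef, fromCols_mul_fromBlocks]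
    have e1 : U₁ * (1 : Matrix (Fin p) (Fin p) ℝ) + U₂ * (0 : Matrix (Fin q) (Fin p) ℝ) = U₁ := by rw [Matrix.mul_one, Matrix.mul_zero, add_zero]
    have e2 : U₁ * (-X) + U₂ * ((2:ℝ) • (1 : Matrix (Fin q) (Fin q) ℝ)) = U₂ + W := by
      rw [Matrix.mul_neg, Matrix.mul_smul, Matrix.mul_one, two_smul ℝ U₂, hWdef]
      abel
    rw [e1, e2]
  have hTdet : IsUnit T.det := by
    rw [hTdef, det_fromBlocks_zero₂₁, det_one, one_mul, det_smul, det_one, mul_one,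
      Fintype.card_fin]
    exact IsUnit.pow q (by norm_num : IsUnit (2:ℝ))
  have hrankV : V.rank = r := by
    rw [hV, rank_mul_eq_left_of_isUnit_det T U hTdet, ← rank_transpose_mul_self, ← hU, hM]
  refine ⟨C + (3:ℝ) • S, ?_, ?_, ?_⟩
  · -- C' ≠ C
    intro hEq
    have hS0 : S = 0 := by
      have h3 : (3:ℝ) • S = 0 := by
        have := congrArg (· - C) hEq
        simpa [add_sub_cancel_left] using this
      have := smul_eq_zero.mp h3
      rcases this with h | h
      · norm_num at h
      · exact h
    have hWzero : W = 0 := by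
      have : Wᴴ * W = 0 := by
        rw [conjTranspose_eq_transpose_of_trivial, ← hSdef, hS0]
      exact conjTranspose_mul_self_eq_zero.mp this
    have hU₂eq : U₂ = U₁ * X := by
      have h := hWzero
      rw [hWdef, sub_eq_zero] at h
      exact h
    have hUfact : U = U₁ * fromCols 1 X := by
      rw [hUcols, mul_fromCols, Matrix.mul_one, hU₂eq]
    have h1 : U.rank ≤ U₁.rank := by rw [hUfact]; exact rank_mul_le_left _ _
    have h2 : U₁.rank = A.rank := by rw [hA', rank_transpose_mul_self]
    have h3 : U.rank = r := by rw [← rank_transpose_mul_self, ← hU, hM]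
    omega
  · rw [hkey]
    have := posSemidef_conjTranspose_mul_self V
    rwa [conjTranspose_eq_transpose_of_trivial] at this
  · rw [hkey, rank_transpose_mul_self, hrankV]
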